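/- Every left strongly regular zero-symmetric unital right near-ring N is left morphic, i.e., every element a ∈ N is left morphic. -/

import Mathlib

/-- A zero-symmetric unital right near-ring: an additive group (not necessarily
abelian) and a multiplicative monoid with `1 ≠ 0`, satisfying the right
distributive law, and zero-symmetric (`x * 0 = 0`). -/
class ZSNearRing (N : Type*) extends AddGroup N, Monoid N where
  right_distrib : ∀ x y z : N, (x + y) * z = x * z + y * z
  mul_zero : ∀ x : N, x * 0 = 0
  one_ne_zero : (1 : N) ≠ (0 : N)

namespace ZSNearRing

variable {N : Type*} [ZSNearRing N]

/-- The set `Na = {n·a : n ∈ N}`. -/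
def NSet (a : N) : Set N := {x | ∃ n : N, x = n * a}

/-- The left annihilator `(0 :ₗ a) = {x ∈ N : x·a = 0}`. -/
def lAnn (a : N) : Set N := {x | x * a = 0}

/-- `a` is left morphic if there is `b` with `Na = (0 :ₗ b)` and `Nb = (0 :ₗ a)`. -/
def IsLeftMorphic (a : N) : Prop := ∃ b : N, NSet a = lAnn b ∧ NSet b = lAnn a

end ZSNearRing

open ZSNearRing

section Aux

variable {N : Type*} [ZSNearRing N]

private lemma zmul' (a : N) : (0 : N) * a = 0 := by
  have h := ZSNearRing.right_distrib (0 : N) 0 a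
  rw [add_zero] at h
  exact right_eq_add.mp h

private lemma nmul' (s t : N) : (-s) * t = -(s * t) := by
  have h := ZSNearRing.right_distrib s (-s) t
  rw [add_neg_cancel, zmul'] at h
  exact eq_neg_of_add_eq_zero_right h.symm

private lemma red' (hsr : ∀ a : N, ∃ x : N, a = x * (a * a))
    {a : N} (h : a * a = 0) : a = 0 := by
  obtain ⟨x, hx⟩ := hsr a
  rw [h, ZSNearRing.mul_zero] at hx
  exact hx

private lemma flip' (hsr : ∀ a : N, ∃ x : N, a = x * (a * a))
    {s t : N} (h : s * t = 0) : t * s = 0 := by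
  apply red' hsr
  rw [mul_assoc, ← mul_assoc s t s, h, zmul', ZSNearRing.mul_zero]

private lemma ifp' (hsr : ∀ a : N, ∃ x : N, a = x * (a * a))
    {s t : N} (h : s * t = 0) (n : N) : s * (n * t) = 0 := by
  have hts : t * s = 0 := flip' hsr h
  apply red' hsr
  calc (s * (n * t)) * (s * (n * t))
      = s * (n * ((t * s) * (n * t))) := by
        simp only [mul_assoc]
    _ = 0 := by rw [hts, zmul', ZSNearRing.mul_zero, ZSNearRing.mul_zero]

end Aux

theorem stmt7 {N : Type*} [ZSNearRing N]
    (hsr : ∀ a : N, ∃ x : N, a = x * (a * a)) :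
    ∀ a : N, IsLeftMorphic a := by
  intro a
  obtain ⟨x, hx⟩ := hsr a
  set e := x * a with he
  have hea : e * a = a := by rw [he, mul_assoc]; exact hx.symm
  -- a = a * e
  have hca : (a + -(a * e)) * a = 0 := by
    rw [ZSNearRing.right_distrib, nmul', mul_assoc, hea, add_neg_cancel]
  have hac : a * (a + -(a * e)) = 0 := flip' hsr hca
  have hec : e * (a + -(a * e)) = 0 := by
    rw [he, mul_assoc, hac, ZSNearRing.mul_zero]
  have hc0 : a + -(a * e) = 0 := by
    apply red' hsr
    rw [ZSNearRing.right_distrib, hac, nmul', mul_assoc, hec,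
      ZSNearRing.mul_zero, zero_add, neg_zero]
  have hae : a * e = a := (add_neg_eq_zero.mp hc0).symm
  have hee : e * e = e := by rw [he, mul_assoc, ← he, hae]
  set f := -e + 1 with hf
  have hfe : f * e = 0 := by
    rw [hf, ZSNearRing.right_distrib, nmul', one_mul, hee, neg_add_cancel]
  have hef : e * f = 0 := by
    have h1 : (e * f) * e = 0 := by rw [mul_assoc, hfe, ZSNearRing.mul_zero]
    have h2 : e * (e * f) = 0 := flip' hsr h1
    rwa [← mul_assoc, hee] at h2
  have hff : f * f = f := by
    rw [hf, ZSNearRing.right_distrib, nmul', one_mul, ← hf, hef, neg_zero, zero_add]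
  have tlem : ∀ t : N, t * e = 0 → t * f = 0 → t = 0 := by
    intro t hte htf
    have het : e * t = 0 := flip' hsr hte
    have hft : f * t = 0 := flip' hsr htf
    have : (e + f) * t = 0 := by rw [ZSNearRing.right_distrib, het, hft, add_zero]
    rwa [hf, add_neg_cancel_left, one_mul] at this
  refine ⟨f, ?_, ?_⟩
  · ext y
    simp only [NSet, lAnn, Set.mem_setOf_eq]
    constructor
    · rintro ⟨n, rfl⟩
      rw [mul_assoc, ← hae, mul_assoc, hef, ZSNearRing.mul_zero, ZSNearRing.mul_zero]
    · intro hy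
      have h1 : (y + -(y * e)) * e = 0 := by
        rw [ZSNearRing.right_distrib, nmul', mul_assoc, hee, add_neg_cancel]
      have h2 : (y + -(y * e)) * f = 0 := by
        rw [ZSNearRing.right_distrib, hy, nmul', mul_assoc, hef,
          ZSNearRing.mul_zero, zero_add, neg_zero]
      have h3 : y = y * e := (add_neg_eq_zero.mp (tlem _ h1 h2))
      exact ⟨y * x, by rw [mul_assoc, ← he, ← h3]⟩
  · ext y
    simp only [NSet, lAnn, Set.mem_setOf_eq]
    constructor
    · rintro ⟨n, rfl⟩
      rw [mul_assoc, ← hea, ← mul_assoc f e a, hfe, zmul', ZSNearRing.mul_zero]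
    · intro hy
      have hye : y * e = 0 := by rw [he]; exact ifp' hsr hy x
      have h1 : (y + -(y * f)) * e = 0 := by
        rw [ZSNearRing.right_distrib, hye, nmul', mul_assoc, hfe,
          ZSNearRing.mul_zero, zero_add, neg_zero]
      have h2 : (y + -(y * f)) * f = 0 := by
        rw [ZSNearRing.right_distrib, nmul', mul_assoc, hff, add_neg_cancel]
      have h3 : y = y * f := (add_neg_eq_zero.mp (tlem _ h1 h2))
      exact ⟨y, h3⟩
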